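/- arXiv:1012.0107 — 2 statements merged into one kernel-verified Lean document; each statement's English description precedes it below -/
import Mathlib

section
/- Let G be a countable group acting effectively and smoothly on a manifold M, in the sense that the action map G × M → M is smooth when G carries the discrete topology. Let U ⊆ ℝ^k be open and connected, and let r ↦ g_r be a map U → G such that (r, m) ↦ g_r · m is smooth from U × M to M. Then r ↦ g_r is constant. -/
open scoped Manifold

lemma aux_countable_preconnected_subsingleton {E : Type*} [NormedAddCommGroup E]
    {s : Set E} (hc : s.Countable) (hp : IsPreconnected s) : s.Subsingleton := by
  intro a ha b hb
  by_contra hne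
  have hd : (0:ℝ) < ‖b - a‖ := by
    simpa [norm_pos_iff, sub_eq_zero] using (Ne.symm hne)
  have hcont : ContinuousOn (fun z : E => ‖z - a‖) s :=
    (continuous_norm.comp (continuous_id.sub continuous_const)).continuousOn
  have himg : IsPreconnected ((fun z : E => ‖z - a‖) '' s) := hp.image _ hcont
  have hoc : ((fun z : E => ‖z - a‖) '' s).OrdConnected := himg.ordConnected
  have h0 : (0:ℝ) ∈ (fun z : E => ‖z - a‖) '' s := ⟨a, ha, by simp⟩
  have hb' : ‖b - a‖ ∈ (fun z : E => ‖z - a‖) '' s := ⟨b, hb, rfl⟩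
  have hsub : Set.Icc (0:ℝ) ‖b - a‖ ⊆ (fun z : E => ‖z - a‖) '' s := hoc.out h0 hb'
  have hIcc : (Set.Icc (0:ℝ) ‖b - a‖).Countable := (hc.image _).mono hsub
  have := hIcc.le_aleph0
  rw [Cardinal.mk_Icc_real hd] at this
  exact absurd this Cardinal.aleph0_lt_continuum.not_ge

/-- Let a countable group `G` act effectively on a manifold `M`, the
action map `G × M → M` being smooth when `G` is discrete (i.e. each `g` acts by a
smooth map).  If `U ⊆ ℝᵏ` is open and connected and `r ↦ g r` is such that
`(r, x) ↦ g r • x` is smooth on `U × M`, then `r ↦ g r` is constant on `U`. -/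
theorem stmt12 {EM HM : Type*} [NormedAddCommGroup EM] [NormedSpace ℝ EM]
    [TopologicalSpace HM] (IM : ModelWithCorners ℝ EM HM)
    {M : Type*} [TopologicalSpace M] [ChartedSpace HM M] [IsManifold IM (⊤ : ℕ∞) M]
    {G : Type*} [Group G] [Countable G] [MulAction G M] [FaithfulSMul G M]
    (hact : ∀ g : G, ContMDiff IM IM (⊤ : ℕ∞) fun x : M => g • x)
    {k : ℕ} (U : Set (EuclideanSpace ℝ (Fin k))) (hUopen : IsOpen U)
    (hUconn : IsConnected U)
    (g : EuclideanSpace ℝ (Fin k) → G)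
    (hg : ContMDiffOn ((𝓘(ℝ, EuclideanSpace ℝ (Fin k))).prod IM) IM (⊤ : ℕ∞)
      (fun p : EuclideanSpace ℝ (Fin k) × M => g p.1 • p.2) (U ×ˢ Set.univ)) :
    ∀ r ∈ U, ∀ s ∈ U, g r = g s := by
  have key : ∀ m : M, ∀ r ∈ U, ∀ s ∈ U, g r • m = g s • m := by
    intro m
    set f : EuclideanSpace ℝ (Fin k) → M := fun r => g r • m with hf
    have hfc : ContinuousOn f U := by
      have h1 : ContinuousOn (fun p : EuclideanSpace ℝ (Fin k) × M => g p.1 • p.2)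
          (U ×ˢ (Set.univ : Set M)) := hg.continuousOn
      have h2 : Continuous fun r : EuclideanSpace ℝ (Fin k) => (r, m) :=
        continuous_id.prodMk continuous_const
      exact h1.comp h2.continuousOn (fun r hr => ⟨hr, trivial⟩)
    have hcnt : Set.Countable (Set.range fun h : G => h • m) := Set.countable_range _
    have hloc : ∀ r₀ ∈ U, ∃ V, IsOpen V ∧ r₀ ∈ V ∧ V ⊆ U ∧ ∀ r ∈ V, f r = f r₀ := by
      intro r₀ hr₀
      set x₀ := f r₀ with hx₀def
      set e := extChartAt IM x₀ with he
      have hes : IsOpen e.source := isOpen_extChartAt_source x₀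
      have hx₀ : x₀ ∈ e.source := mem_extChartAt_source x₀
      have hVo : IsOpen (U ∩ f ⁻¹' e.source) :=
        hfc.isOpen_inter_preimage hUopen hes
      set V := connectedComponentIn (U ∩ f ⁻¹' e.source) r₀ with hV
      have hr₀V : r₀ ∈ V := mem_connectedComponentIn ⟨hr₀, hx₀⟩
      have hVopen : IsOpen V := hVo.connectedComponentIn
      have hVsub : V ⊆ U ∩ f ⁻¹' e.source := connectedComponentIn_subset _ _
      have hVsubU : V ⊆ U := hVsub.trans Set.inter_subset_left
      have hVconn : IsPreconnected V := isPreconnected_connectedComponentIn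
      have hcomp : ContinuousOn (fun r => e (f r)) V :=
        (continuousOn_extChartAt x₀).comp (hfc.mono hVsubU)
          (fun r hr => (hVsub hr).2)
      have himg : IsPreconnected ((fun r => e (f r)) '' V) := hVconn.image _ hcomp
      have himgc : Set.Countable ((fun r => e (f r)) '' V) := by
        refine Set.Countable.mono ?_ (hcnt.image e)
        rintro y ⟨r, hr, rfl⟩
        exact ⟨f r, ⟨g r, rfl⟩, rfl⟩
      have hss := aux_countable_preconnected_subsingleton himgc himg
      refine ⟨V, hVopen, hr₀V, hVsubU, fun r hr => ?_⟩
      have heq : e (f r) = e (f r₀) := hss ⟨r, hr, rfl⟩ ⟨r₀, hr₀V, rfl⟩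
      exact e.injOn (hVsub hr).2 (hVsub hr₀V).2 heq
    intro r hr s hs
    by_contra hne
    set A := {x | ∃ V, IsOpen V ∧ x ∈ V ∧ V ⊆ U ∧ ∀ t ∈ V, f t = f s} with hA
    set B := {x | ∃ V, IsOpen V ∧ x ∈ V ∧ V ⊆ U ∧ ∀ t ∈ V, f t ≠ f s} with hB
    have hAopen : IsOpen A := by
      rw [isOpen_iff_forall_mem_open]
      rintro x ⟨V, hVo, hxV, hVU, hVc⟩
      exact ⟨V, fun t ht => ⟨V, hVo, ht, hVU, hVc⟩, hVo, hxV⟩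
    have hBopen : IsOpen B := by
      rw [isOpen_iff_forall_mem_open]
      rintro x ⟨V, hVo, hxV, hVU, hVc⟩
      exact ⟨V, fun t ht => ⟨V, hVo, ht, hVU, hVc⟩, hVo, hxV⟩
    have hcover : U ⊆ A ∪ B := by
      intro x hx
      obtain ⟨V, hVo, hxV, hVU, hVc⟩ := hloc x hx
      by_cases hxs : f x = f s
      · exact Or.inl ⟨V, hVo, hxV, hVU, fun t ht => (hVc t ht).trans hxs⟩
      · exact Or.inr ⟨V, hVo, hxV, hVU, fun t ht => (hVc t ht).symm ▸ hxs⟩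
    have hsA : s ∈ U ∩ A := by
      obtain ⟨V, hVo, hxV, hVU, hVc⟩ := hloc s hs
      exact ⟨hs, V, hVo, hxV, hVU, hVc⟩
    have hrB : r ∈ U ∩ B := by
      obtain ⟨V, hVo, hxV, hVU, hVc⟩ := hloc r hr
      exact ⟨hr, V, hVo, hxV, hVU, fun t ht => (hVc t ht).symm ▸ hne⟩
    obtain ⟨x, -, ⟨_, _, hx1, _, hc1⟩, ⟨_, _, hx2, _, hc2⟩⟩ :=
      hUconn.isPreconnected _ _ hAopen hBopen hcover ⟨s, hsA⟩ ⟨r, hrB⟩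
    exact hc2 x hx2 (hc1 x hx1)
  intro r hr s hs
  exact eq_of_smul_eq_smul (fun m : M => key m r hr s hs)
end

section
/- Let G be a topological group acting continuously on a topological space M, let m ∈ M, and let ψ : O × D → M be a homeomorphism onto an open set U_m, where O ⊆ G is open and D ⊆ M, with ψ(a,x) = a·x. For x ∈ D define A_x = {g ∈ G : g·m ∈ ψ(O × {x})}. Then the sets A_x, for distinct x ∈ D, are pairwise disjoint, and each A_x is open in G. -/
/-- Let a topological group `G` act continuously on `M`, let `m ∈ M`,
`O ⊆ G` open, `D ⊆ M`, and let `ψ : O × D → M, (a, x) ↦ a • x`, be a homeomorphism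
onto an open set `U_m` (in particular injective on `O ×ˢ D` with open image).  For
`x ∈ D` let `A_x = {g : g • m ∈ ψ (O × {x})}`.  Then each `A_x` is open, and for
distinct `x, y ∈ D` the sets `A_x` and `A_y` are disjoint. -/
theorem stmt19 {G M : Type*} [Group G] [TopologicalSpace G] [IsTopologicalGroup G]
    [TopologicalSpace M] [MulAction G M]
    (hact : Continuous fun p : G × M => p.1 • p.2)
    (m : M) (O : Set G) (hO : IsOpen O) (D : Set M)
    (hinj : Set.InjOn (fun p : G × M => p.1 • p.2) (O ×ˢ D))
    (hopenim : IsOpen ((fun p : G × M => p.1 • p.2) '' (O ×ˢ D))) :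
    (∀ x ∈ D, IsOpen {g : G | ∃ a ∈ O, g • m = a • x}) ∧
    (∀ x ∈ D, ∀ y ∈ D, x ≠ y →
      Disjoint {g : G | ∃ a ∈ O, g • m = a • x} {g : G | ∃ a ∈ O, g • m = a • y}) := by
  constructor
  · intro x hx
    rw [isOpen_iff_forall_mem_open]
    rintro g ⟨a, haO, hg⟩
    refine ⟨(· * (a⁻¹ * g)) '' O, ?_, (isOpenMap_mul_right _) O hO,
      ⟨a, haO, by group⟩⟩
    rintro h ⟨b, hbO, rfl⟩
    exact ⟨b, hbO, by simp [mul_smul, hg]⟩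
  · intro x hx y hy hxy
    rw [Set.disjoint_left]
    rintro g ⟨a, haO, hgx⟩ ⟨b, hbO, hgy⟩
    have : ((a, x) : G × M) = (b, y) :=
      hinj (Set.mk_mem_prod haO hx) (Set.mk_mem_prod hbO hy) (by simp only []; rw [← hgx, ← hgy])
    exact hxy (congrArg Prod.snd this)
end
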